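/- Let X be a compact Hausdorff space, σ : X → X a homeomorphism, and f : ℤ × X → ℤ a function such that f(n, ·) is continuous for each n ∈ ℤ, f(m + n, x) = f(m, x) + f(n, σ^m(x)) for all m, n ∈ ℤ and x ∈ X, and n ↦ f(n, x) is a bijection of ℤ for each x ∈ X. Then there is a positive integer N such that the sets X₁ := {x ∈ X : f(n, x) > 0 and f(−n, x) < 0 for all n > N} and X₂ := {x ∈ X : f(n, x) < 0 and f(−n, x) > 0 for all n > N} are clopen, satisfy σ(X₁) ⊆ X₁ and σ(X₂) ⊆ X₂, and X is the disjoint union of X₁ and X₂. -/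

import Mathlib

/-- Key pointwise lemma: if an injective-and-surjective "cocycle in one fiber" has
bounded steps and escapes `[-C,C]` uniformly outside `[-N,N]`, then positivity at
`N+1` forces positivity on the whole positive tail and negativity on the negative tail. -/
lemma aux16 {X : Type} (f : ℤ → X → ℤ) (C : ℤ) (N : ℕ)
    (hbij : ∀ x : X, Function.Bijective fun n : ℤ => f n x)
    (hstep : ∀ (n : ℤ) (x : X), |f (n + 1) x - f n x| ≤ C)
    (hesc : ∀ (x : X) (n : ℤ), (N : ℤ) < |n| → C < |f n x|)
    (x : X) (hx : 0 < f ((N : ℤ) + 1) x) :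
    ∀ n : ℤ, (N : ℤ) < n → 0 < f n x ∧ f (-n) x < 0 := by
  have hC0 : 0 ≤ C := le_trans (abs_nonneg _) (hstep 0 x)
  have posC : ∀ n : ℤ, (N : ℤ) < |n| → 0 < f n x → C < f n x := by
    intro n hn hp
    have h := hesc x n hn
    rwa [abs_of_pos hp] at h
  have pos_up : ∀ n : ℤ, (N : ℤ) < |n| → 0 < f n x → 0 < f (n + 1) x := by
    intro n hn hp
    have h1 := abs_le.mp (hstep n x)
    have h2 := posC n hn hp
    linarith [h1.1]
  have pos_dn : ∀ n : ℤ, (N : ℤ) < |n| → 0 < f n x → 0 < f (n - 1) x := by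
    intro n hn hp
    have h1 := hstep (n - 1) x
    rw [sub_add_cancel] at h1
    have h1' := abs_le.mp h1
    have h2 := posC n hn hp
    linarith [h1'.2]
  have A : ∀ n : ℤ, (N : ℤ) + 1 ≤ n → 0 < f n x := by
    intro n hn
    refine Int.le_induction (motive := fun n _ => 0 < f n x) hx ?_ n hn
    intro m hm ih
    refine pos_up m ?_ ih
    have : (0:ℤ) < m := by omega
    rw [abs_of_pos this]; omega
  intro n hn
  refine ⟨A n (by omega), ?_⟩
  by_contra hcon
  push_neg at hcon
  have hnn : (N : ℤ) < |(-n)| := by rw [abs_neg, abs_of_pos (by omega : (0:ℤ) < n)]; omega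
  have hne := hesc x (-n) hnn
  have hpos0 : 0 < f (-n) x := by
    rcases lt_or_ge 0 (f (-n) x) with h | h
    · exact h
    · rw [abs_of_nonpos h] at hne
      omega
  -- positivity propagates to the whole negative tail
  have Bdown : ∀ k : ℤ, k ≤ -n → 0 < f k x := by
    intro k hk
    refine Int.le_induction_down (motive := fun k _ => 0 < f k x) hpos0 ?_ k hk
    intro m hm ih
    refine pos_dn m ?_ ih
    have hm0 : m < 0 := by omega
    rw [abs_of_neg hm0]; omega
  have Bup : ∀ k : ℤ, -n ≤ k → k ≤ -((N : ℤ) + 1) → 0 < f k x := by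
    intro k hk
    refine Int.le_induction (motive := fun k _ => k ≤ -((N : ℤ) + 1) → 0 < f k x)
      (fun _ => hpos0) ?_ k hk
    intro m hm ih hm1
    have hmN : m ≤ -((N : ℤ) + 1) := by omega
    refine pos_up m ?_ (ih hmN)
    have hm0 : m < 0 := by omega
    rw [abs_of_neg hm0]; omega
  have pos_all : ∀ m : ℤ, (N : ℤ) < |m| → 0 < f m x := by
    intro m hm
    rcases le_or_gt 0 m with h | h
    · rw [abs_of_nonneg h] at hm
      exact A m (by omega)
    · rw [abs_of_neg h] at hm
      rcases le_total m (-n) with h2 | h2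
      · exact Bdown m h2
      · exact Bup m h2 (by omega)
  -- pigeonhole: all values ≤ -1 must be attained inside [-N, N]
  obtain ⟨hfinj, hfsurj⟩ := hbij x
  choose inv hinv using hfsurj
  have hmem : ∀ v ∈ Finset.Icc (1 : ℤ) (2 * N + 2), inv (-v) ∈ Finset.Icc (-(N : ℤ)) N := by
    intro v hv
    rw [Finset.mem_Icc] at hv ⊢
    by_contra hcon2
    have habs : (N : ℤ) < |inv (-v)| := by
      rcases le_or_gt 0 (inv (-v)) with h | h
      · rw [abs_of_nonneg h]; omega
      · rw [abs_of_neg h]; omega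
    have hp := pos_all _ habs
    have hval : f (inv (-v)) x = -v := hinv (-v)
    omega
  have hinj : Set.InjOn (fun v => inv (-v)) (Finset.Icc (1 : ℤ) (2 * N + 2)) := by
    intro a _ b _ hab
    have ha : f (inv (-a)) x = -a := hinv (-a)
    have hb : f (inv (-b)) x = -b := hinv (-b)
    simp only at hab
    rw [hab, hb] at ha
    omega
  have hcard := Finset.card_le_card_of_injOn _ hmem hinj
  rw [Int.card_Icc, Int.card_Icc] at hcard
  omega

theorem statement_16 (X : Type) [TopologicalSpace X] [CompactSpace X] [T2Space X]
    (σ : X ≃ₜ X) (f : ℤ → X → ℤ)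
    (hcont : ∀ n : ℤ, Continuous (f n))
    (hcoc : ∀ (m n : ℤ) (x : X), f (m + n) x = f m x + f n ((σ.toEquiv ^ m) x))
    (hbij : ∀ x : X, Function.Bijective fun n : ℤ => f n x) :
    ∃ N : ℕ, 0 < N ∧
      ∀ X₁ X₂ : Set X,
        X₁ = {x | ∀ n : ℤ, (N : ℤ) < n → 0 < f n x ∧ f (-n) x < 0} →
        X₂ = {x | ∀ n : ℤ, (N : ℤ) < n → f n x < 0 ∧ 0 < f (-n) x} →
        IsClopen X₁ ∧ IsClopen X₂ ∧
        Set.MapsTo σ X₁ X₁ ∧ Set.MapsTo σ X₂ X₂ ∧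
        X₁ ∪ X₂ = Set.univ ∧ X₁ ∩ X₂ = ∅ := by
  classical
  rcases isEmpty_or_nonempty X with hX | hX
  · refine ⟨1, one_pos, ?_⟩
    intro X₁ X₂ h1 h2
    have e1 : X₁ = ∅ := by rw [h1]; exact Set.eq_empty_of_isEmpty _
    have e2 : X₂ = ∅ := by rw [h2]; exact Set.eq_empty_of_isEmpty _
    have eu : (Set.univ : Set X) = ∅ := Set.eq_empty_of_isEmpty _
    rw [e1, e2, eu]
    exact ⟨isClopen_empty, isClopen_empty, Set.mapsTo_empty _ _, Set.mapsTo_empty _ _,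
      by simp, by simp⟩
  -- the step bound C
  obtain ⟨C, hC⟩ : ∃ C : ℤ, ∀ y : X, |f 1 y| ≤ C := by
    have hc1 : Continuous fun y : X => |f 1 y| :=
      (continuous_of_discreteTopology (f := fun v : ℤ => |v|)).comp (hcont 1)
    obtain ⟨C, hCub⟩ := (isCompact_range hc1).finite_of_discrete.bddAbove
    exact ⟨C, fun y => hCub (Set.mem_range_self y)⟩
  have hC0 : 0 ≤ C := le_trans (abs_nonneg _) (hC (Classical.arbitrary X))
  -- uniform escape
  obtain ⟨N, hNpos, hesc⟩ :
      ∃ N : ℕ, 0 < N ∧ ∀ (x : X) (n : ℤ), (N : ℤ) < |n| → C < |f n x| := by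
    have key : ∀ v : ℤ, ∃ B : ℕ, ∀ (x : X) (n : ℤ), f n x = v → |n| ≤ (B : ℤ) := by
      intro v
      have hopen : ∀ n : ℤ, IsOpen ((f n) ⁻¹' {v}) :=
        fun n => (isOpen_discrete _).preimage (hcont n)
      have hcover : (Set.univ : Set X) ⊆ ⋃ n : ℤ, (f n) ⁻¹' {v} := by
        intro x _
        obtain ⟨n, hn⟩ := (hbij x).2 v
        exact Set.mem_iUnion.mpr ⟨n, hn⟩
      obtain ⟨t, ht⟩ := isCompact_univ.elim_finite_subcover _ hopen hcover
      refine ⟨t.sup Int.natAbs, ?_⟩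
      intro x n hn
      have hx : x ∈ ⋃ m ∈ t, (f m) ⁻¹' {v} := ht (Set.mem_univ x)
      simp only [Set.mem_iUnion, Set.mem_preimage, Set.mem_singleton_iff] at hx
      obtain ⟨m, hmt, hm⟩ := hx
      have hnm : n = m := (hbij x).1 (by simp only []; rw [hn, hm])
      subst hnm
      have hle : n.natAbs ≤ t.sup Int.natAbs := Finset.le_sup hmt
      rw [Int.abs_eq_natAbs]
      exact_mod_cast hle
    choose B hB using key
    refine ⟨(Finset.Icc (-C) C).sup B + 1, Nat.succ_pos _, ?_⟩
    intro x n hn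
    by_contra hcon
    push_neg at hcon
    have hv : f n x ∈ Finset.Icc (-C) C := Finset.mem_Icc.mpr (abs_le.mp hcon)
    have h1 : |n| ≤ (B (f n x) : ℤ) := hB (f n x) x n rfl
    have h2 : B (f n x) ≤ (Finset.Icc (-C) C).sup B := Finset.le_sup hv
    have h3 : (B (f n x) : ℤ) ≤ (((Finset.Icc (-C) C).sup B : ℕ) : ℤ) := Int.ofNat_le.mpr h2
    push_cast at hn
    linarith
  -- bounded steps
  have hstep : ∀ (n : ℤ) (x : X), |f (n + 1) x - f n x| ≤ C := by
    intro n x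
    rw [hcoc n 1 x]
    simpa using hC _
  -- the two half lemmas
  have hpos : ∀ x : X, 0 < f ((N : ℤ) + 1) x →
      ∀ n : ℤ, (N : ℤ) < n → 0 < f n x ∧ f (-n) x < 0 :=
    fun x hx => aux16 f C N hbij hstep hesc x hx
  have hneg : ∀ x : X, f ((N : ℤ) + 1) x < 0 →
      ∀ n : ℤ, (N : ℤ) < n → f n x < 0 ∧ 0 < f (-n) x := by
    have hbij' : ∀ x : X, Function.Bijective fun n : ℤ => -f n x :=
      fun x => (Equiv.neg ℤ).bijective.comp (hbij x)
    have hstep' : ∀ (n : ℤ) (x : X), |(-f (n + 1) x) - (-f n x)| ≤ C := by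
      intro n x
      rw [neg_sub_neg, abs_sub_comm]
      exact hstep n x
    have hesc' : ∀ (x : X) (n : ℤ), (N : ℤ) < |n| → C < |(-f n x)| := by
      intro x n hn
      rw [abs_neg]
      exact hesc x n hn
    intro x hx n hn
    have h := aux16 (fun n x => -f n x) C N hbij' hstep' hesc' x (by simpa using hx) n hn
    have ha : 0 < -f n x := h.1
    have hb : -f (-n) x < 0 := h.2
    exact ⟨by linarith, by linarith⟩
  have hNlt : ∀ x : X, C < |f ((N : ℤ) + 1) x| := by
    intro x
    refine hesc x _ ?_
    rw [abs_of_pos (by positivity)]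
    omega
  refine ⟨N, hNpos, ?_⟩
  intro X₁ X₂ h1 h2
  subst h1; subst h2
  -- clopen characterizations
  have e1 : {x : X | ∀ n : ℤ, (N : ℤ) < n → 0 < f n x ∧ f (-n) x < 0}
      = {x : X | 0 < f ((N : ℤ) + 1) x} := by
    ext x
    simp only [Set.mem_setOf_eq]
    exact ⟨fun h => (h ((N : ℤ) + 1) (by omega)).1, fun h n hn => hpos x h n hn⟩
  have e2 : {x : X | ∀ n : ℤ, (N : ℤ) < n → f n x < 0 ∧ 0 < f (-n) x}
      = {x : X | f ((N : ℤ) + 1) x < 0} := by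
    ext x
    simp only [Set.mem_setOf_eq]
    exact ⟨fun h => (h ((N : ℤ) + 1) (by omega)).1, fun h n hn => hneg x h n hn⟩
  rw [e1, e2]
  refine ⟨?_, ?_, ?_, ?_, ?_, ?_⟩
  · exact (isClopen_discrete (Set.Ioi (0:ℤ))).preimage (hcont _)
  · exact (isClopen_discrete (Set.Iio (0:ℤ))).preimage (hcont _)
  · intro x hx
    simp only [Set.mem_setOf_eq] at hx ⊢
    have hc := hcoc 1 ((N : ℤ) + 1) x
    rw [zpow_one] at hc
    have hσ : (σ.toEquiv : X → X) x = σ x := rfl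
    rw [hσ] at hc
    have hp : 0 < f (1 + ((N : ℤ) + 1)) x := (hpos x hx (1 + ((N : ℤ) + 1)) (by omega)).1
    have hgt : C < f (1 + ((N : ℤ) + 1)) x := by
      have := hesc x (1 + ((N : ℤ) + 1)) (by rw [abs_of_pos (by omega)]; omega)
      rwa [abs_of_pos hp] at this
    have hb := abs_le.mp (hC x)
    linarith
  · intro x hx
    simp only [Set.mem_setOf_eq] at hx ⊢
    have hc := hcoc 1 ((N : ℤ) + 1) x
    rw [zpow_one] at hc
    have hσ : (σ.toEquiv : X → X) x = σ x := rfl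
    rw [hσ] at hc
    have hp : f (1 + ((N : ℤ) + 1)) x < 0 := (hneg x hx (1 + ((N : ℤ) + 1)) (by omega)).1
    have hlt : f (1 + ((N : ℤ) + 1)) x < -C := by
      have h := hesc x (1 + ((N : ℤ) + 1)) (by rw [abs_of_pos (by omega)]; omega)
      rw [abs_of_neg hp] at h
      omega
    have hb := abs_le.mp (hC x)
    linarith
  · apply Set.eq_univ_of_forall
    intro x
    have h := hNlt x
    rcases lt_trichotomy (f ((N : ℤ) + 1) x) 0 with h1 | h1 | h1
    · exact Or.inr h1
    · rw [h1] at h; simp at h; omega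
    · exact Or.inl h1
  · apply Set.eq_empty_iff_forall_notMem.mpr
    intro x hx
    obtain ⟨ha, hb⟩ := hx
    simp only [Set.mem_setOf_eq] at ha hb
    linarith
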